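/- Let V ⊆ ℝᵐ satisfy aV ⊆ V for all a ≥ 0, and consider trajectories of q' = Σᵢ uᵢ(t) Fᵢ(q) with u(t) ∈ V and cost C[q] = ∫_0^T √(Σᵢ uᵢ²) dt. If there exists a trajectory q̄ from q₀ to q₁ with L¹ controls and cost L, then there exists a trajectory from q₀ to q₁ with the same cost L, defined on [0,T], whose controls are in L^∞ with ‖u‖ ≤ L/T almost everywhere; moreover this trajectory is a reparametrization of q̄. -/

import Mathlib

open Real Set MeasureTheory

private lemma sqrt_sum_sq_smul {m : ℕ} (a : ℝ) (u : Fin m → ℝ) :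
    Real.sqrt (∑ i, (a * u i) ^ 2) = |a| * Real.sqrt (∑ i, u i ^ 2) := by
  have h : ∑ i, (a * u i) ^ 2 = a ^ 2 * ∑ i, u i ^ 2 := by
    rw [Finset.mul_sum]; congr 1; ext i; ring
  rw [h, Real.sqrt_mul (sq_nonneg a), Real.sqrt_sq_eq_abs]

private lemma eq_zero_of_sqrt_sum_sq {m : ℕ} {u : Fin m → ℝ}
    (h : Real.sqrt (∑ i, u i ^ 2) = 0) (i : Fin m) : u i = 0 := by
  have h0 : (0:ℝ) ≤ ∑ j, u j ^ 2 := Finset.sum_nonneg fun j _ => sq_nonneg _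
  have h1 : ∑ j, u j ^ 2 = 0 := le_antisymm (Real.sqrt_eq_zero'.mp h) h0
  have := (Finset.sum_eq_zero_iff_of_nonneg (fun j _ => sq_nonneg (u j))).mp h1 i (Finset.mem_univ i)
  exact pow_eq_zero_iff (two_ne_zero) |>.mp this

theorem stmt_17 {E : Type*} [NormedAddCommGroup E] [NormedSpace ℝ E]
    (m : ℕ) (V : Set (Fin m → ℝ))
    (hV : ∀ a : ℝ, 0 ≤ a → ∀ v ∈ V, a • v ∈ V)
    (F : Fin m → E → E) (T : ℝ) (hT : 0 < T)
    (u : ℝ → Fin m → ℝ)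
    (huV : ∀ t ∈ Icc 0 T, u t ∈ V)
    (huI : IntegrableOn (fun t => Real.sqrt (∑ i, u t i ^ 2)) (Icc 0 T))
    (q : ℝ → E)
    (hq : ∀ t ∈ Icc 0 T,
      q t = q 0 + ∫ τ in (0:ℝ)..t, ∑ i, u τ i • F i (q τ))
    (L : ℝ) (hL : L = ∫ t in (0:ℝ)..T, Real.sqrt (∑ i, u t i ^ 2)) :
    ∃ (uh : ℝ → Fin m → ℝ) (qh : ℝ → E) (φ : ℝ → ℝ),
      MonotoneOn φ (Icc 0 T) ∧ MapsTo φ (Icc 0 T) (Icc 0 T) ∧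
      (∀ t ∈ Icc 0 T, qh t = q (φ t)) ∧
      qh 0 = q 0 ∧ qh T = q T ∧
      (∀ t ∈ Icc 0 T, uh t ∈ V) ∧
      (∀ᵐ t ∂(volume.restrict (Icc 0 T)), Real.sqrt (∑ i, uh t i ^ 2) ≤ L / T) ∧
      (∀ t ∈ Icc 0 T,
        qh t = qh 0 + ∫ τ in (0:ℝ)..t, ∑ i, uh τ i • F i (qh τ)) ∧
      (∫ t in (0:ℝ)..T, Real.sqrt (∑ i, uh t i ^ 2)) = L := by
  set h : ℝ → ℝ := fun t => Real.sqrt (∑ i, u t i ^ 2) with hh_def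
  have hhnn : ∀ t, 0 ≤ h t := fun t => Real.sqrt_nonneg _
  have hzeroV : (0 : Fin m → ℝ) ∈ V := by
    have := hV 0 le_rfl (u 0) (huV 0 ⟨le_rfl, hT.le⟩)
    rwa [zero_smul] at this
  -- w : the velocity of the original trajectory
  set w : ℝ → E := fun τ => ∑ i, u τ i • F i (q τ) with hw_def
  have hwzero : ∀ τ, h τ = 0 → w τ = 0 := by
    intro τ hτ
    have := eq_zero_of_sqrt_sum_sq (u := u τ) hτ
    simp only [hw_def]
    exact Finset.sum_eq_zero fun i _ => by rw [this i, zero_smul]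
  have hLnn : 0 ≤ L := by
    rw [hL]
    exact intervalIntegral.integral_nonneg hT.le fun x _ => hhnn x
  have hqIoc : ∀ x ∈ Icc 0 T, q x = q 0 + ∫ τ in Ioc 0 x, w τ := by
    intro x hx
    rw [hq x hx, intervalIntegral.integral_of_le hx.1]
  by_cases hL0 : L = 0
  · -- degenerate case : zero cost
    refine ⟨fun _ => 0, q, id, monotoneOn_id, mapsTo_id _, fun t _ => rfl, rfl, rfl,
      fun t _ => hzeroV, ?_, ?_, ?_⟩
    · filter_upwards with t
      simp [hL0, div_nonneg, hT.le]
    · -- the ODE : q is constant on [0,T]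
      have hhae : h =ᵐ[volume.restrict (Ioc 0 T)] 0 := by
        have hint : ∫ τ in Ioc 0 T, h τ = 0 := by
          rw [← intervalIntegral.integral_of_le hT.le, ← hL, hL0]
        exact (integral_eq_zero_iff_of_nonneg_ae (Filter.Eventually.of_forall fun t => hhnn t)
          (huI.mono_set Ioc_subset_Icc_self)).mp hint
      have hwae : w =ᵐ[volume.restrict (Ioc 0 T)] 0 := by
        filter_upwards [hhae] with τ hτ using hwzero τ hτ
      intro t ht
      have h1 : ∫ τ in Ioc 0 t, w τ = 0 := by
        rw [integral_congr_ae (ae_restrict_of_ae_restrict_of_subset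
          (Ioc_subset_Ioc le_rfl ht.2) hwae)]
        simp
      have h2 : ∀ x ∈ Icc 0 T, q x = q 0 := by
        intro x hx
        rw [hqIoc x hx]
        have : ∫ τ in Ioc 0 x, w τ = 0 := by
          rw [integral_congr_ae (ae_restrict_of_ae_restrict_of_subset
            (Ioc_subset_Ioc le_rfl hx.2) hwae)]
          simp
        rw [this, add_zero]
      rw [h2 t ht]
      have : (fun τ => ∑ i, (0:Fin m → ℝ) i • F i (q τ)) = fun _ => (0:E) := by
        funext τ; simp
      rw [this]
      simp
    · simp [hL0]
  · -- main case : L > 0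
    have hLpos : 0 < L := lt_of_le_of_ne hLnn (Ne.symm hL0)
    set c : ℝ := L / T with hc_def
    have hc : 0 < c := div_pos hLpos hT
    have hcT : c * T = L := by rw [hc_def]; field_simp
    -- measurable nonnegative version of the indicator of h
    set G : ℝ → ℝ := (Icc (0:ℝ) T).indicator h with hG_def
    have hGnn : ∀ t, 0 ≤ G t := fun t => by
      by_cases ht : t ∈ Icc (0:ℝ) T <;> simp [hG_def, indicator_of_mem, indicator_of_notMem, ht, hhnn]
    have hGmem : ∀ t ∈ Icc (0:ℝ) T, G t = h t := fun t ht => indicator_of_mem ht h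
    have hGaesm : AEStronglyMeasurable G volume :=
      (aestronglyMeasurable_indicator_iff measurableSet_Icc).mpr huI.aestronglyMeasurable
    have hGint : Integrable G volume := huI.integrable_indicator measurableSet_Icc
    set htil : ℝ → ℝ := fun x => max (hGaesm.mk G x) 0 with htil_def
    have htilMeas : Measurable htil :=
      hGaesm.stronglyMeasurable_mk.measurable.max measurable_const
    have htilnn : ∀ x, 0 ≤ htil x := fun x => le_max_right _ _
    have hGhtil : G =ᵐ[volume] htil := by
      filter_upwards [hGaesm.ae_eq_mk] with x hx
      rw [htil_def]
      simp only [← hx]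
      exact (max_eq_left (hGnn x)).symm
    have htilInt : Integrable htil volume := hGint.congr hGhtil
    have hIntIv : ∀ a b : ℝ, IntervalIntegrable htil volume a b := fun a b =>
      htilInt.intervalIntegrable
    set f : ℝ → ℝ := fun x => ∫ τ in (0:ℝ)..x, htil τ with hf_def
    have hf0 : f 0 = 0 := intervalIntegral.integral_same
    have hfmono : Monotone f := by
      intro a b hab
      have h1 : f a + ∫ τ in a..b, htil τ = f b :=
        intervalIntegral.integral_add_adjacent_intervals (hIntIv 0 a) (hIntIv a b)
      have h2 : 0 ≤ ∫ τ in a..b, htil τ :=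
        intervalIntegral.integral_nonneg hab fun x _ => htilnn x
      linarith
    have hfcont : Continuous f := intervalIntegral.continuous_primitive hIntIv 0
    have hfIoc : ∀ x : ℝ, 0 ≤ x → f x = ∫ τ in Ioc 0 x, htil τ := fun x hx =>
      intervalIntegral.integral_of_le hx
    have hhtil_h : ∀ x : ℝ, x ≤ T →
        htil =ᵐ[volume.restrict (Ioc 0 x)] h := by
      intro x hx
      have h1 : htil =ᵐ[volume.restrict (Ioc 0 x)] G :=
        ae_restrict_of_ae hGhtil.symm
      filter_upwards [h1, ae_restrict_mem measurableSet_Ioc] with τ h1 h2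
      rw [h1, hGmem τ ⟨h2.1.le, h2.2.trans hx⟩]
    have hfT : f T = L := by
      rw [hfIoc T hT.le, integral_congr_ae (hhtil_h T le_rfl), hL,
        intervalIntegral.integral_of_le hT.le]
    -- the time-rescaled inverse φ0
    set A : ℝ → Set ℝ := fun s => Icc 0 T ∩ {t | f t ≤ c * s} with hA_def
    set φ0 : ℝ → ℝ := fun s => sSup (A s) with hφ0_def
    have hAne : ∀ s ∈ Icc (0:ℝ) T, (0:ℝ) ∈ A s := by
      intro s hs
      exact ⟨⟨le_rfl, hT.le⟩, by simp only [mem_setOf_eq, hf0]; exact mul_nonneg hc.le hs.1⟩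
    have hAbdd : ∀ s : ℝ, BddAbove (A s) := fun s => ⟨T, fun x hx => hx.1.2⟩
    have hAmem : ∀ s ∈ Icc (0:ℝ) T, φ0 s ∈ A s := by
      intro s hs
      have hcomp : IsCompact (A s) := isCompact_Icc.inter_right (isClosed_le hfcont continuous_const)
      exact hcomp.sSup_mem ⟨0, hAne s hs⟩
    have hφIcc : ∀ s ∈ Icc (0:ℝ) T, φ0 s ∈ Icc (0:ℝ) T := fun s hs => (hAmem s hs).1
    have hfφ : ∀ s ∈ Icc (0:ℝ) T, f (φ0 s) = c * s := by
      intro s hs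
      have hle : f (φ0 s) ≤ c * s := (hAmem s hs).2
      have hcs : c * s ∈ Icc (f 0) (f T) := by
        rw [hf0, hfT]
        constructor
        · exact mul_nonneg hc.le hs.1
        · calc c * s ≤ c * T := by nlinarith [hs.2, hc.le]
            _ = L := hcT
      obtain ⟨τ, hτIcc, hτ⟩ := intermediate_value_Icc hT.le hfcont.continuousOn hcs
      have hτmem : τ ∈ A s := ⟨hτIcc, le_of_eq hτ⟩
      have : τ ≤ φ0 s := le_csSup (hAbdd s) hτmem
      exact le_antisymm hle (hτ ▸ hfmono this)
    have hφmono : ∀ s₁ ∈ Icc (0:ℝ) T, ∀ s₂ ∈ Icc (0:ℝ) T, s₁ ≤ s₂ → φ0 s₁ ≤ φ0 s₂ := by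
      intro s₁ hs₁ s₂ hs₂ hs
      apply csSup_le_csSup (hAbdd s₂) ⟨0, hAne s₁ hs₁⟩
      intro x hx
      exact ⟨hx.1, hx.2.trans (mul_le_mul_of_nonneg_left hs hc.le)⟩
    have hφstrict : ∀ s₁ ∈ Icc (0:ℝ) T, ∀ s₂ ∈ Icc (0:ℝ) T, s₁ < s₂ → φ0 s₁ < φ0 s₂ := by
      intro s₁ hs₁ s₂ hs₂ hs
      by_contra hcon
      push_neg at hcon
      have := hfmono hcon
      rw [hfφ s₁ hs₁, hfφ s₂ hs₂] at this
      nlinarith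
    have hφT : φ0 T = T := by
      apply le_antisymm (csSup_le ⟨0, hAne T ⟨hT.le, le_rfl⟩⟩ fun x hx => hx.1.2)
      exact le_csSup (hAbdd T) ⟨⟨hT.le, le_rfl⟩, by rw [mem_setOf_eq, hfT, hcT]⟩
    -- the globalized reparametrization phat
    set phat : ℝ → ℝ := fun s => if s < 0 then s + φ0 0 else if s ≤ T then φ0 s else s
      with hphat_def
    have hphat_eq : ∀ s ∈ Icc (0:ℝ) T, phat s = φ0 s := by
      intro s hs
      simp only [hphat_def, not_lt.2 hs.1, if_false, hs.2, if_true]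
    have hφ00 : φ0 0 ∈ Icc (0:ℝ) T := hφIcc 0 ⟨le_rfl, hT.le⟩
    have hphatSM : StrictMono phat := by
      intro a b hab
      rcases lt_or_ge a 0 with ha | ha
      · rcases lt_or_ge b 0 with hb | hb
        · simp only [hphat_def, if_pos ha, if_pos hb]
          linarith
        · rcases le_or_gt b T with hbT | hbT
          · simp only [hphat_def, if_pos ha, not_lt.2 hb, if_false, if_pos hbT]
            have := hφmono 0 ⟨le_rfl, hT.le⟩ b ⟨hb, hbT⟩ hb
            linarith
          · simp only [hphat_def, if_pos ha, not_lt.2 hb, if_false, not_le.2 hbT, if_false]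
            have := hφ00.2
            linarith
      · rcases le_or_gt a T with haT | haT
        · have hb0 : ¬ b < 0 := not_lt.2 (ha.trans hab.le)
          rcases le_or_gt b T with hbT | hbT
          · simp only [hphat_def, not_lt.2 ha, if_false, if_pos haT, hb0, if_pos hbT]
            exact hφstrict a ⟨ha, haT⟩ b ⟨ha.trans hab.le, hbT⟩ hab
          · simp only [hphat_def, not_lt.2 ha, if_false, if_pos haT, hb0, not_le.2 hbT, if_false]
            have := (hφIcc a ⟨ha, haT⟩).2
            linarith
        · have hb0 : ¬ b < 0 := not_lt.2 (le_of_lt (lt_trans (hT.trans haT) hab))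
          have hbT : ¬ b ≤ T := not_le.2 (haT.trans hab)
          simp only [hphat_def, not_lt.2 ha, if_false, not_le.2 haT, hb0, hbT]
          exact hab
    have hphatMeas : Measurable phat := hphatSM.monotone.measurable
    have hphatEmb : MeasurableEmbedding phat := hphatMeas.measurableEmbedding hphatSM.injective
    -- the density measure
    set ν : Measure ℝ := volume.withDensity (fun τ => ENNReal.ofReal (htil τ)) with hν_def
    have hνIoc : ∀ x : ℝ, 0 ≤ x → ν (Ioc 0 x) = ENNReal.ofReal (f x) := by
      intro x hx
      rw [hν_def, withDensity_apply _ measurableSet_Ioc,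
        ← ofReal_integral_eq_lintegral_ofReal htilInt.integrableOn
          (Filter.Eventually.of_forall fun τ => htilnn τ), hfIoc x hx]
    have hνac : ν ≪ volume := withDensity_absolutelyContinuous _ _
    -- the pushforward identity
    have hmap : ∀ t ∈ Icc (0:ℝ) T, Measure.map phat (volume.restrict (Ioc 0 t)) =
        (ENNReal.ofReal c)⁻¹ • ν.restrict (Ioc 0 (φ0 t)) := by
      intro t ht
      have hφt := hφIcc t ht
      haveI : IsFiniteMeasure (volume.restrict (Ioc (0:ℝ) t)) :=
        ⟨by rw [Measure.restrict_apply_univ]; exact measure_Ioc_lt_top⟩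
      haveI : IsFiniteMeasure ((volume.restrict (Ioc (0:ℝ) t)).map phat) :=
        Measure.isFiniteMeasure_map _ _
      refine Measure.ext_of_Iic _ _ (fun b => ?_)
      rw [Measure.map_apply hphatMeas measurableSet_Iic,
        Measure.restrict_apply (hphatMeas measurableSet_Iic),
        Measure.smul_apply, Measure.restrict_apply measurableSet_Iic, smul_eq_mul]
      have hIocIcc : ∀ s, s ∈ Ioc (0:ℝ) t → s ∈ Icc (0:ℝ) T :=
        fun s hs => ⟨hs.1.le, hs.2.trans ht.2⟩
      rcases lt_or_ge b 0 with hb | hb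
      · -- both sides are zero
        have h1 : phat ⁻¹' Iic b ∩ Ioc 0 t = ∅ := by
          ext s
          simp only [mem_inter_iff, mem_preimage, mem_Iic, mem_empty_iff_false, iff_false,
            not_and]
          intro hsb hs
          rw [hphat_eq s (hIocIcc s hs)] at hsb
          exact absurd hsb (not_le.2 (hb.trans_le (hφIcc s (hIocIcc s hs)).1))
        have h2 : Iic b ∩ Ioc 0 (φ0 t) = ∅ := by
          apply eq_empty_iff_forall_notMem.2
          rintro s ⟨hsb, hs⟩
          rw [mem_Iic] at hsb
          rw [mem_Ioc] at hs
          exact absurd (hs.1.trans_le hsb) (not_lt.2 hb.le)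
        rw [h1, h2, measure_empty, measure_empty, mul_zero]
      · set b' : ℝ := min b T with hb'_def
        have hb'0 : 0 ≤ b' := le_min hb hT.le
        have hb'T : b' ≤ T := min_le_right _ _
        set r : ℝ := f b' / c with hr_def
        have hfb'nn : 0 ≤ f b' := by rw [← hf0]; exact hfmono hb'0
        have hr0 : 0 ≤ r := div_nonneg hfb'nn hc.le
        -- the sandwich
        have hsub1 : Ioc 0 t ∩ Iio r ⊆ phat ⁻¹' Iic b ∩ Ioc 0 t := by
          rintro s ⟨hs, hsr⟩
          have hsIcc := hIocIcc s hs
          refine ⟨?_, hs⟩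
          rw [mem_preimage, mem_Iic, hphat_eq s hsIcc]
          refine le_trans ?_ (min_le_left b T)
          apply csSup_le ⟨0, hAne s hsIcc⟩
          intro τ hτ
          by_contra hcon
          push_neg at hcon
          have h1 : f b' ≤ f τ := hfmono hcon.le
          have h2 : f τ ≤ c * s := hτ.2
          have h3 : c * s < f b' := by
            have hsr' : s < f b' / c := hsr
            rw [lt_div_iff₀ hc] at hsr'
            calc c * s = s * c := mul_comm _ _
              _ < f b' := hsr'
          linarith
        have hsub2 : phat ⁻¹' Iic b ∩ Ioc 0 t ⊆ Ioc 0 (min t r) := by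
          rintro s ⟨hsb, hs⟩
          have hsIcc := hIocIcc s hs
          rw [mem_preimage, mem_Iic, hphat_eq s hsIcc] at hsb
          have hφb' : φ0 s ≤ b' := le_min hsb (hφIcc s hsIcc).2
          have h1 : c * s ≤ f b' := by
            rw [← hfφ s hsIcc]
            exact hfmono hφb'
          have h2 : s ≤ r := by
            rw [hr_def, le_div_iff₀ hc, mul_comm s c]
            exact h1
          exact ⟨hs.1, le_min hs.2 h2⟩
        have hvol2 : volume (Ioc (0:ℝ) (min t r)) = ENNReal.ofReal (min t r) := by
          rw [Real.volume_Ioc, sub_zero]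
        have hvol1 : volume (Ioc (0:ℝ) t ∩ Iio r) = ENNReal.ofReal (min t r) := by
          rcases lt_or_ge t r with htr | htr
          · have : Ioc (0:ℝ) t ∩ Iio r = Ioc 0 t := by
              apply inter_eq_left.2
              intro s hs
              exact hs.2.trans_lt htr
            rw [this, Real.volume_Ioc, sub_zero, min_eq_left htr.le]
          · have : Ioc (0:ℝ) t ∩ Iio r = Ioo 0 r := by
              ext s
              simp only [mem_inter_iff, mem_Ioc, mem_Iio, mem_Ioo]
              constructor
              · rintro ⟨⟨h1, _⟩, h3⟩; exact ⟨h1, h3⟩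
              · rintro ⟨h1, h2⟩; exact ⟨⟨h1, h2.le.trans htr⟩, h2⟩
            rw [this, Real.volume_Ioo, sub_zero, min_eq_right htr]
        have hLHS : volume (phat ⁻¹' Iic b ∩ Ioc 0 t) = ENNReal.ofReal (min t r) :=
          le_antisymm (hvol2 ▸ measure_mono hsub2) (hvol1 ▸ measure_mono hsub1)
        rw [hLHS]
        -- right-hand side
        have hinter : Iic b ∩ Ioc 0 (φ0 t) = Ioc 0 (min (φ0 t) b') := by
          rw [inter_comm, Ioc_inter_Iic]
          congr 1
          rcases le_total b T with hbT | hbT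
          · rw [hb'_def, min_eq_left hbT]
          · rw [hb'_def, min_eq_right hbT, min_eq_left (hφt.2.trans hbT),
              min_eq_left hφt.2]
        rw [hinter, hνIoc _ (le_min hφt.1 hb'0)]
        have hfmin : f (min (φ0 t) b') = min (c * t) (f b') := by
          rw [hfmono.map_min, hfφ t ht]
        rw [hfmin, ← ENNReal.div_eq_inv_mul, ← ENNReal.ofReal_div_of_pos hc]
        congr 1
        rw [← min_div_div_right hc.le, mul_comm, mul_div_assoc, div_self hc.ne', mul_one,
          hr_def]
    -- the new control and its basic identities
    set g : ℝ → E := fun τ => (h τ)⁻¹ • w τ with hg_def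
    set uh : ℝ → Fin m → ℝ :=
      fun s => if h (phat s) = 0 then 0 else (c / h (phat s)) • u (phat s) with huh_def
    have hgs : ∀ τ, g τ = (h τ)⁻¹ • w τ := fun τ => rfl
    have hws : ∀ τ, w τ = ∑ i, u τ i • F i (q τ) := fun τ => rfl
    have hWh : ∀ s, (∑ i, uh s i • F i (q (phat s))) = c • g (phat s) := by
      intro s
      by_cases hz : h (phat s) = 0
      · have h1 : uh s = 0 := by rw [huh_def]; simp [hz]
        rw [h1, hgs, hz, inv_zero, zero_smul, smul_zero]
        exact Finset.sum_eq_zero fun i _ => by rw [Pi.zero_apply, zero_smul]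
      · have h1 : uh s = fun i => (c / h (phat s)) * u (phat s) i := by
          rw [huh_def]; simp [hz]; rfl
        rw [h1, hgs, hws]
        calc (∑ i, ((c / h (phat s)) * u (phat s) i) • F i (q (phat s)))
            = ∑ i, (c / h (phat s)) • (u (phat s) i • F i (q (phat s))) := by
              refine Finset.sum_congr rfl fun i _ => ?_
              rw [mul_smul]
          _ = (c / h (phat s)) • ∑ i, u (phat s) i • F i (q (phat s)) :=
              (Finset.smul_sum).symm
          _ = c • (h (phat s))⁻¹ • ∑ i, u (phat s) i • F i (q (phat s)) := by
              rw [smul_smul, div_eq_mul_inv]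
    have hcost_val : ∀ s, Real.sqrt (∑ i, uh s i ^ 2) = if h (phat s) = 0 then 0 else c := by
      intro s
      by_cases hz : h (phat s) = 0
      · simp only [huh_def, if_pos hz, Pi.zero_apply]
        simp
      · simp only [huh_def, if_neg hz, Pi.smul_apply, smul_eq_mul]
        rw [sqrt_sum_sq_smul]
        have hsq : Real.sqrt (∑ i, u (phat s) i ^ 2) = h (phat s) := rfl
        rw [hsq]
        have hpos : 0 < h (phat s) := lt_of_le_of_ne (hhnn _) (Ne.symm hz)
        rw [abs_of_nonneg (div_nonneg hc.le hpos.le), div_mul_cancel₀ _ hz]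
    -- change of variables for the ODE integral
    have hkey : ∀ t ∈ Icc (0:ℝ) T,
        (∫ s in Ioc 0 t, ∑ i, uh s i • F i (q (phat s))) = ∫ τ in Ioc 0 (φ0 t), w τ := by
      intro t ht
      have hφt := hφIcc t ht
      calc (∫ s in Ioc 0 t, ∑ i, uh s i • F i (q (phat s)))
          = ∫ s in Ioc 0 t, c • g (phat s) :=
            integral_congr_ae (Filter.Eventually.of_forall fun s => hWh s)
        _ = c • ∫ s in Ioc 0 t, g (phat s) := integral_smul c _
        _ = c • ∫ y, g y ∂(Measure.map phat (volume.restrict (Ioc 0 t))) := by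
            rw [hphatEmb.integral_map]
        _ = c • ∫ y, g y ∂((ENNReal.ofReal c)⁻¹ • ν.restrict (Ioc 0 (φ0 t))) := by
            rw [hmap t ht]
        _ = c • (c⁻¹ • ∫ y, g y ∂(ν.restrict (Ioc 0 (φ0 t)))) := by
            rw [integral_smul_measure, ENNReal.toReal_inv, ENNReal.toReal_ofReal hc.le]
        _ = ∫ y, g y ∂(ν.restrict (Ioc 0 (φ0 t))) := by
            rw [smul_smul, mul_inv_cancel₀ hc.ne', one_smul]
        _ = ∫ y in Ioc 0 (φ0 t), (htil y).toNNReal • g y := by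
            rw [hν_def, restrict_withDensity measurableSet_Ioc]
            exact integral_withDensity_eq_integral_smul
              (measurable_real_toNNReal.comp htilMeas) g
        _ = ∫ τ in Ioc 0 (φ0 t), w τ := by
            apply integral_congr_ae
            filter_upwards [hhtil_h (φ0 t) hφt.2] with τ hτ
            rw [NNReal.smul_def, Real.coe_toNNReal _ (htilnn τ), hτ]
            by_cases hz : h τ = 0
            · rw [hz, zero_smul, hwzero τ hz]
            · rw [hg_def]
              simp only
              rw [smul_smul, mul_inv_cancel₀ hz, one_smul]
    -- the reparametrized curve starts at q 0
    have hq0 : q (φ0 0) = q 0 := by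
      have h0Icc : (0:ℝ) ∈ Icc (0:ℝ) T := ⟨le_rfl, hT.le⟩
      have hx := hφIcc 0 h0Icc
      have hint0 : ∫ τ in Ioc 0 (φ0 0), htil τ = 0 := by
        rw [← hfIoc _ hx.1]
        rw [hfφ 0 h0Icc, mul_zero]
      have hhae : htil =ᵐ[volume.restrict (Ioc 0 (φ0 0))] 0 :=
        (integral_eq_zero_iff_of_nonneg_ae
          (Filter.Eventually.of_forall fun τ => htilnn τ) htilInt.integrableOn).mp hint0
      have hwae : w =ᵐ[volume.restrict (Ioc 0 (φ0 0))] 0 := by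
        filter_upwards [hhae, hhtil_h (φ0 0) hx.2] with τ h1 h2
        exact hwzero τ (by rw [← h2]; simpa using h1)
      rw [hqIoc _ hx, integral_congr_ae hwae]
      simp
    -- almost everywhere the original control does not vanish at reparametrized times
    have hae_ne : ∀ᵐ s ∂(volume.restrict (Ioc (0:ℝ) T)), h (phat s) ≠ 0 := by
      obtain ⟨N', hNsub, hNmeas, hNnull⟩ :=
        exists_measurable_superset_of_null (ae_iff.mp hGhtil)
      set Z : Set ℝ := htil ⁻¹' {0} with hZ_def
      have hZmeas : MeasurableSet Z := htilMeas (measurableSet_singleton 0)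
      rw [ae_iff]
      have hsub : {s | ¬ h (phat s) ≠ 0} ∩ Ioc 0 T ⊆ phat ⁻¹' (N' ∪ Z) ∩ Ioc 0 T := by
        rintro s ⟨hs1, hs2⟩
        refine ⟨?_, hs2⟩
        simp only [mem_setOf_eq, not_not] at hs1
        have hsIcc : s ∈ Icc (0:ℝ) T := ⟨hs2.1.le, hs2.2⟩
        have hφs : phat s ∈ Icc (0:ℝ) T := by
          rw [hphat_eq s hsIcc]; exact hφIcc s hsIcc
        by_cases hzz : htil (phat s) = 0
        · exact mem_preimage.2 (Or.inr hzz)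
        · refine mem_preimage.2 (Or.inl (hNsub ?_))
          simp only [mem_setOf_eq]
          rw [hGmem _ hφs, hs1]
          exact fun hcon => hzz hcon.symm
        
      have hTIcc : T ∈ Icc (0:ℝ) T := ⟨hT.le, le_rfl⟩
      refine le_antisymm ?_ zero_le
      calc volume.restrict (Ioc (0:ℝ) T) {s | ¬ h (phat s) ≠ 0}
          = volume ({s | ¬ h (phat s) ≠ 0} ∩ Ioc 0 T) :=
            Measure.restrict_apply' measurableSet_Ioc
        _ ≤ volume (phat ⁻¹' (N' ∪ Z) ∩ Ioc 0 T) := measure_mono hsub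
        _ = Measure.map phat (volume.restrict (Ioc 0 T)) (N' ∪ Z) := by
            rw [Measure.map_apply hphatMeas (hNmeas.union hZmeas),
              Measure.restrict_apply (hphatMeas (hNmeas.union hZmeas))]
        _ = (ENNReal.ofReal c)⁻¹ * ν.restrict (Ioc 0 (φ0 T)) (N' ∪ Z) := by
            rw [hmap T hTIcc, Measure.smul_apply, smul_eq_mul]
        _ ≤ (ENNReal.ofReal c)⁻¹ * ν (N' ∪ Z) := by
            gcongr
            exact Measure.le_iff'.2 fun s => Measure.restrict_le_self s
        _ ≤ (ENNReal.ofReal c)⁻¹ * (ν N' + ν Z) := by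
            gcongr
            exact measure_union_le _ _
        _ = 0 := by
            have h1 : ν N' = 0 := hνac hNnull
            have h2 : ν Z = 0 := by
              rw [hν_def, withDensity_apply _ hZmeas]
              rw [setLIntegral_congr_fun hZmeas
                ((fun x hx => by
                  rw [hZ_def] at hx
                  simp only [mem_preimage, mem_singleton_iff] at hx
                  rw [hx]
                  simp : ∀ x ∈ Z, ENNReal.ofReal (htil x) = 0))]
              simp
            rw [h1, h2, add_zero, mul_zero]
    -- assemble everything
    refine ⟨uh, fun s => q (phat s), phat, hphatSM.monotone.monotoneOn _, ?_, fun t _ => rfl,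
      ?_, ?_, ?_, ?_, ?_, ?_⟩
    · intro s hs
      rw [hphat_eq s hs]
      exact hφIcc s hs
    · show q (phat 0) = q 0
      rw [hphat_eq 0 ⟨le_rfl, hT.le⟩, hq0]
    · show q (phat T) = q T
      rw [hphat_eq T ⟨hT.le, le_rfl⟩, hφT]
    · intro t htIcc
      have hφt : phat t ∈ Icc (0:ℝ) T := by
        rw [hphat_eq t htIcc]; exact hφIcc t htIcc
      by_cases hz : h (phat t) = 0
      · simp only [huh_def, if_pos hz]
        exact hzeroV
      · simp only [huh_def, if_neg hz]
        exact hV _ (div_nonneg hc.le (hhnn _)) _ (huV _ hφt)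
    · filter_upwards with s
      rw [hcost_val s]
      split_ifs
      · exact hc.le
      · exact le_rfl
    · intro t htIcc
      show q (phat t) = q (phat 0) + ∫ τ in (0:ℝ)..t, ∑ i, uh τ i • F i (q (phat τ))
      rw [hphat_eq t htIcc, hqIoc _ (hφIcc t htIcc), hphat_eq 0 ⟨le_rfl, hT.le⟩, hq0,
        intervalIntegral.integral_of_le htIcc.1, ← hkey t htIcc]
    · rw [intervalIntegral.integral_of_le hT.le]
      have : ∫ s in Ioc (0:ℝ) T, Real.sqrt (∑ i, uh s i ^ 2) = ∫ s in Ioc (0:ℝ) T, c := by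
        apply integral_congr_ae
        filter_upwards [hae_ne] with s hs
        rw [hcost_val s, if_neg hs]
      rw [this, setIntegral_const, measureReal_def, Real.volume_Ioc, sub_zero, ENNReal.toReal_ofReal hT.le,
        smul_eq_mul, mul_comm, hcT]
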